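/- Let S, T ∈ ℝ^{n×n}, N ∈ ℝ^{n×n} invertible, and P₁, P₂ ∈ ℝ^{n×n} permutation matrices. Set S̄ = NSP₁ and T̄ = NTP₂. Then 𝒮(x⁰;S,T) is a minimal poised set for nested-set Hessian computation at x⁰ (i.e., S and T are full rank and 𝒮(x⁰;S,T) has exactly (n+1)(n+2)/2 distinct points) if and only if 𝒮(x⁰;S̄,T̄) is a minimal poised set for nested-set Hessian computation at x⁰. -/

import Mathlib

open Matrix

/-- The set of distinct points used in the nested-set Hessian computation:
x⁰, x⁰+sⁱ, x⁰+tʲ, x⁰+sⁱ+tʲ for the columns sⁱ of S and tʲ of T. -/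
def nshcSet {n : ℕ} (x0 : Fin n → ℝ) (S T : Matrix (Fin n) (Fin n) ℝ) :
    Set (Fin n → ℝ) :=
  {x0} ∪ {y | ∃ i, y = x0 + fun r => S r i} ∪ {y | ∃ j, y = x0 + fun r => T r j}
    ∪ {y | ∃ i j, y = (x0 + fun r => S r i) + fun r => T r j}

/-- S(x⁰;S,T) is a minimal poised set for nested-set Hessian computation:
S and T are full rank and the evaluation set has exactly (n+1)(n+2)/2 points. -/
def IsMinimalPoisedNSHC {n : ℕ} (x0 : Fin n → ℝ)
    (S T : Matrix (Fin n) (Fin n) ℝ) : Prop :=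
  IsUnit S.det ∧ IsUnit T.det ∧ (nshcSet x0 S T).ncard = (n + 1) * (n + 2) / 2

/-- A permutation matrix. -/
def IsPermMatrix {n : ℕ} (P : Matrix (Fin n) (Fin n) ℝ) : Prop :=
  ∃ σ : Equiv.Perm (Fin n), P = Matrix.of fun i j => if σ j = i then (1 : ℝ) else 0

def permM {n : ℕ} (σ : Equiv.Perm (Fin n)) : Matrix (Fin n) (Fin n) ℝ :=
  Matrix.of fun i j => if σ j = i then (1 : ℝ) else 0

lemma permM_mul {n : ℕ} (σ τ : Equiv.Perm (Fin n)) :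
    permM σ * permM τ = permM (σ * τ) := by
  ext i j
  simp [permM, Matrix.mul_apply, Finset.sum_ite_eq, Equiv.Perm.mul_apply]
  congr

lemma permM_one {n : ℕ} : permM (1 : Equiv.Perm (Fin n)) = 1 := by
  ext i j
  simp [permM, Matrix.one_apply, eq_comm]

lemma permM_det_isUnit {n : ℕ} (σ : Equiv.Perm (Fin n)) : IsUnit (permM σ).det := by
  apply IsUnit.of_mul_eq_one (permM σ⁻¹).det
  rw [← Matrix.det_mul, permM_mul, mul_inv_cancel, permM_one, Matrix.det_one]

lemma col_mul {n : ℕ} (N M : Matrix (Fin n) (Fin n) ℝ) (σ : Equiv.Perm (Fin n)) (i : Fin n) :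
    (fun r => (N * M * permM σ) r i) = N.mulVec (fun r => M r (σ i)) := by
  funext r
  simp [permM, Matrix.mul_apply, Matrix.mulVec, dotProduct, Finset.sum_ite_eq,
    Finset.mul_sum, mul_comm]

lemma nshc_image {n : ℕ} (x0 : Fin n → ℝ) (S T N : Matrix (Fin n) (Fin n) ℝ)
    (σ1 σ2 : Equiv.Perm (Fin n)) :
    nshcSet x0 (N * S * permM σ1) (N * T * permM σ2)
      = (fun y => x0 + N.mulVec (y - x0)) '' nshcSet x0 S T := by
  have hd : ∀ v : Fin n → ℝ, (x0 + v) - x0 = v := fun v => add_sub_cancel_left x0 v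
  ext y
  simp only [nshcSet, Set.mem_union, Set.mem_singleton_iff, Set.mem_setOf_eq, Set.mem_image]
  constructor
  · rintro (((h | ⟨i, h⟩) | ⟨j, h⟩) | ⟨i, j, h⟩) <;> subst h
    · exact ⟨y, Or.inl (Or.inl (Or.inl rfl)), by simp⟩
    · refine ⟨x0 + fun r => S r (σ1 i), Or.inl (Or.inl (Or.inr ⟨σ1 i, rfl⟩)), ?_⟩
      simp only [hd, col_mul]
    · refine ⟨x0 + fun r => T r (σ2 j), Or.inl (Or.inr ⟨σ2 j, rfl⟩), ?_⟩
      simp only [hd, col_mul]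
    · refine ⟨(x0 + fun r => S r (σ1 i)) + fun r => T r (σ2 j),
        Or.inr ⟨σ1 i, σ2 j, rfl⟩, ?_⟩
      simp only [add_assoc, hd, col_mul, Matrix.mulVec_add]
  · rintro ⟨z, (((h | ⟨i, h⟩) | ⟨j, h⟩) | ⟨i, j, h⟩), rfl⟩ <;> subst h
    · exact Or.inl (Or.inl (Or.inl (by simp)))
    · refine Or.inl (Or.inl (Or.inr ⟨σ1⁻¹ i, ?_⟩))
      simp only [hd, col_mul, Equiv.Perm.inv_def, Equiv.apply_symm_apply]
    · refine Or.inl (Or.inr ⟨σ2⁻¹ j, ?_⟩)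
      simp only [hd, col_mul, Equiv.Perm.inv_def, Equiv.apply_symm_apply]
    · refine Or.inr ⟨σ1⁻¹ i, σ2⁻¹ j, ?_⟩
      simp only [add_assoc, hd, col_mul, Matrix.mulVec_add, Equiv.Perm.inv_def, Equiv.apply_symm_apply]

lemma key {n : ℕ} (x0 : Fin n → ℝ) (S T N P1 P2 : Matrix (Fin n) (Fin n) ℝ)
    (hN : IsUnit N.det) (hP1 : IsPermMatrix P1) (hP2 : IsPermMatrix P2)
    (h : IsMinimalPoisedNSHC x0 S T) :
    IsMinimalPoisedNSHC x0 (N * S * P1) (N * T * P2) := by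
  obtain ⟨σ1, rfl⟩ := hP1
  obtain ⟨σ2, rfl⟩ := hP2
  obtain ⟨hS, hT, hcard⟩ := h
  have hP1u := permM_det_isUnit σ1
  have hP2u := permM_det_isUnit σ2
  have hinj : Function.Injective (fun y : Fin n → ℝ => x0 + N.mulVec (y - x0)) := by
    intro a b hab
    have h2 : N.mulVec (a - x0) = N.mulVec (b - x0) := by
      simpa using hab
    have h3 : a - x0 = b - x0 := by
      have := congrArg (N⁻¹.mulVec) h2
      rwa [Matrix.mulVec_mulVec, Matrix.mulVec_mulVec, Matrix.nonsing_inv_mul N hN,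
        Matrix.one_mulVec, Matrix.one_mulVec] at this
    exact sub_left_injective h3
  refine ⟨?_, ?_, ?_⟩
  · rw [Matrix.det_mul, Matrix.det_mul]
    exact (hN.mul hS).mul hP1u
  · rw [Matrix.det_mul, Matrix.det_mul]
    exact (hN.mul hT).mul hP2u
  · rw [show (Matrix.of fun i j => if σ1 j = i then (1:ℝ) else 0) = permM σ1 from rfl,
      show (Matrix.of fun i j => if σ2 j = i then (1:ℝ) else 0) = permM σ2 from rfl,
      nshc_image, Set.ncard_image_of_injective _ hinj]
    exact hcard

theorem minimal_poised_NSHC_invariance {n : ℕ}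
    (x0 : Fin n → ℝ) (S T N P1 P2 : Matrix (Fin n) (Fin n) ℝ)
    (hN : IsUnit N.det) (hP1 : IsPermMatrix P1) (hP2 : IsPermMatrix P2) :
    IsMinimalPoisedNSHC x0 S T ↔ IsMinimalPoisedNSHC x0 (N * S * P1) (N * T * P2) := by
  constructor
  · exact key x0 S T N P1 P2 hN hP1 hP2
  · intro h
    obtain ⟨σ1, rfl⟩ := hP1
    obtain ⟨σ2, rfl⟩ := hP2
    have hNi : IsUnit N⁻¹.det := (Matrix.isUnit_nonsing_inv_det N hN)
    have := key x0 (N * S * permM σ1) (N * T * permM σ2) N⁻¹ (permM σ1⁻¹) (permM σ2⁻¹)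
      hNi ⟨σ1⁻¹, rfl⟩ ⟨σ2⁻¹, rfl⟩ h
    have e1 : ∀ M : Matrix (Fin n) (Fin n) ℝ, ∀ σ : Equiv.Perm (Fin n),
        N⁻¹ * (N * M * permM σ) * permM σ⁻¹ = M := by
      intro M σ
      rw [mul_assoc N M, ← mul_assoc N⁻¹, Matrix.nonsing_inv_mul N hN, one_mul,
        mul_assoc M, permM_mul, mul_inv_cancel, permM_one, mul_one]
    rwa [e1, e1] at this
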